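/- arXiv:2002.09715 — 2 statements merged into one kernel-verified Lean document; each statement's English description precedes it below -/
import Mathlib

section
/- For the function q_α(t,x,y) = min(t^{-n/α}, t·d^{-n-α}) with d = d_g(x,y), there exists a constant C (depending on α, n) such that for all d with 0 < d < N^{-1/(2α)} one has ∫_0^∞ e^{-Nt} q_α(t,x,y) dt ≤ C d^{α-n}, and for d ≥ N^{-1/(2α)} one has ∫_0^∞ e^{-Nt} q_α(t,x,y) dt ≤ C (N^{-1} d^{α-n} + N^{n/α - 1} e^{-√N}). -/
open MeasureTheory Real Set

lemma my_integral_exp_neg_mul_Ioi {N : ℝ} (hN : 0 < N) (c : ℝ) :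
    ∫ t in Ioi c, Real.exp (-N * t) = Real.exp (-N * c) / N := by
  have hderiv : ∀ x ∈ Ici c, HasDerivAt (fun x => -(Real.exp (-N * x) / N))
      (Real.exp (-N * x)) x := by
    intro x _
    have h1 : HasDerivAt (fun x : ℝ => -N * x) (-N) x := by
      simpa using (hasDerivAt_id x).const_mul (-N)
    have h2 := (h1.exp.div_const N).neg
    convert h2 using 1
    · rfl
    · rfl
    · rfl
    · field_simp
  have hint : IntegrableOn (fun x => Real.exp (-N * x)) (Ioi c) :=
    exp_neg_integrableOn_Ioi c hN
  have htend : Filter.Tendsto (fun x => -(Real.exp (-N * x) / N)) Filter.atTop (nhds 0) := by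
    have h1 : Filter.Tendsto (fun x : ℝ => -N * x) Filter.atTop Filter.atBot :=
      Filter.tendsto_id.const_mul_atTop_of_neg (by linarith)
    have h2 := ((Real.tendsto_exp_atBot.comp h1).div_const N).neg
    simpa using h2
  have h := integral_Ioi_of_hasDerivAt_of_tendsto' hderiv hint htend
  rw [h]; ring

/-- Laplace-transform estimates for `q_α(t) = min(t^{-n/α}, t d^{-n-α})`:
for `d < N^{-1/(2α)}` the integral `∫_0^∞ e^{-Nt} q_α(t) dt` is `≤ C d^{α-n}`, and for
`d ≥ N^{-1/(2α)}` it is `≤ C (N^{-1} d^{α-n} + N^{n/α-1} e^{-√N})`. -/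
theorem laplace_transform_qalpha_bounds (n : ℕ) (hn : 2 ≤ n) (α : ℝ) (hα : 0 < α)
    (hα2 : α < 2) :
    ∃ C : ℝ, 0 < C ∧ ∀ N : ℝ, 1 ≤ N → ∀ d : ℝ, 0 < d →
      ((d < N ^ (-(1 / (2 * α))) →
        (∫ t in Ioi (0 : ℝ),
            Real.exp (-N * t) * min (t ^ (-((n : ℝ) / α))) (t * d ^ (-((n : ℝ) + α))))
          ≤ C * d ^ (α - (n : ℝ))) ∧
      (N ^ (-(1 / (2 * α))) ≤ d →
        (∫ t in Ioi (0 : ℝ),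
            Real.exp (-N * t) * min (t ^ (-((n : ℝ) / α))) (t * d ^ (-((n : ℝ) + α))))
          ≤ C * (N⁻¹ * d ^ (α - (n : ℝ)) + N ^ ((n : ℝ) / α - 1) * Real.exp (-Real.sqrt N)))) := by
  have hn2 : (2:ℝ) ≤ (n:ℝ) := by exact_mod_cast hn
  have hαn : α < (n:ℝ) := lt_of_lt_of_le hα2 hn2
  have hna : 0 < (n:ℝ) - α := by linarith
  set p : ℝ := -((n:ℝ)/α) with hp_def
  have hp : p < -1 := by
    have h1 : 1 < (n:ℝ)/α := (one_lt_div hα).mpr hαn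
    rw [hp_def]; linarith
  refine ⟨1 + α/((n:ℝ)-α), by positivity, ?_⟩
  intro N hN d hd
  have hN0 : (0:ℝ) < N := lt_of_lt_of_le one_pos hN
  set c : ℝ := -((n:ℝ) + α) with hc_def
  set a : ℝ := d ^ α with ha_def
  have ha : 0 < a := Real.rpow_pos_of_pos hd α
  have hdc : 0 < d ^ c := Real.rpow_pos_of_pos hd c
  set f : ℝ → ℝ := fun t => Real.exp (-N * t) * min (t ^ p) (t * d ^ c) with hf_def
  -- measurability
  have hm : Measurable f := by
    apply ((measurable_id.const_mul (-N)).exp).mul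
    exact (measurable_id.pow_const p).min (measurable_id.mul_const _)
  -- pointwise bounds
  have hfnn : ∀ t ∈ Ioi (0:ℝ), 0 ≤ f t := by
    intro t ht
    have ht0 : (0:ℝ) < t := ht
    apply mul_nonneg (Real.exp_nonneg _)
    exact le_min (Real.rpow_nonneg ht0.le p) (by positivity)
  have hfle1 : ∀ t ∈ Ioi (0:ℝ), f t ≤ Real.exp (-N * t) * (t * d ^ c) :=
    fun t _ => mul_le_mul_of_nonneg_left (min_le_right _ _) (Real.exp_nonneg _)
  have hfle2 : ∀ t ∈ Ioi (0:ℝ), f t ≤ Real.exp (-N * t) * t ^ p :=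
    fun t _ => mul_le_mul_of_nonneg_left (min_le_left _ _) (Real.exp_nonneg _)
  have hexple : ∀ t ∈ Ioi (0:ℝ), Real.exp (-N * t) ≤ 1 := by
    intro t ht
    have ht0 : (0:ℝ) < t := ht
    apply Real.exp_le_one_iff.mpr
    nlinarith
  -- integrability on the two pieces
  have g1int : IntegrableOn (fun t : ℝ => t * d ^ c) (Ioc 0 a) :=
    (continuous_id.mul continuous_const).integrableOn_Ioc
  have I1 : IntegrableOn f (Ioc 0 a) := by
    apply g1int.mono' hm.aestronglyMeasurable
    rw [ae_restrict_iff' measurableSet_Ioc]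
    apply ae_of_all
    intro t ht
    have ht0 : t ∈ Ioi (0:ℝ) := ht.1
    rw [Real.norm_eq_abs, abs_of_nonneg (hfnn t ht0)]
    calc f t ≤ Real.exp (-N * t) * (t * d ^ c) := hfle1 t ht0
      _ ≤ 1 * (t * d ^ c) := by
          apply mul_le_mul_of_nonneg_right (hexple t ht0)
          have : (0:ℝ) < t := ht0
          positivity
      _ = t * d ^ c := one_mul _
  have g2int : IntegrableOn (fun t : ℝ => t ^ p) (Ioi a) :=
    integrableOn_Ioi_rpow_of_lt hp ha
  have I2 : IntegrableOn f (Ioi a) := by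
    apply g2int.mono' hm.aestronglyMeasurable
    rw [ae_restrict_iff' measurableSet_Ioi]
    apply ae_of_all
    intro t ht
    have ht0 : t ∈ Ioi (0:ℝ) := lt_trans ha ht
    rw [Real.norm_eq_abs, abs_of_nonneg (hfnn t ht0)]
    calc f t ≤ Real.exp (-N * t) * t ^ p := hfle2 t ht0
      _ ≤ 1 * t ^ p := by
          apply mul_le_mul_of_nonneg_right (hexple t ht0)
          exact Real.rpow_nonneg (le_of_lt ht0) p
      _ = t ^ p := one_mul _
  -- splitting
  have hsplit : (∫ t in Ioi (0:ℝ), f t) = (∫ t in Ioc 0 a, f t) + ∫ t in Ioi a, f t := by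
    have h := setIntegral_union (Ioc_disjoint_Ioi le_rfl) measurableSet_Ioi I1 I2
    rw [Ioc_union_Ioi_eq_Ioi ha.le] at h
    exact h
  -- exponent algebra
  have hdapos : 0 < d ^ (α - (n:ℝ)) := Real.rpow_pos_of_pos hd _
  have hne1 : α - (n:ℝ) ≠ 0 := by linarith
  have hne2 : (n:ℝ) - α ≠ 0 := hna.ne'
  have haa : a ^ 2 * d ^ c = d ^ (α - (n:ℝ)) := by
    have h2 : α * ((2:ℕ):ℝ) + c = α - (n:ℝ) := by rw [hc_def]; push_cast; ring
    rw [ha_def, ← Real.rpow_natCast (d ^ α) 2, ← Real.rpow_mul hd.le, ← Real.rpow_add hd, h2]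
  have hap : a ^ (p + 1) = d ^ (α - (n:ℝ)) := by
    have h2 : α * (p + 1) = α - (n:ℝ) := by rw [hp_def]; field_simp; ring
    rw [ha_def, ← Real.rpow_mul hd.le, h2]
  constructor
  · -- case 1
    intro _
    have B1 : (∫ t in Ioc (0:ℝ) a, f t) ≤ d ^ (α - (n:ℝ)) / 2 := by
      calc (∫ t in Ioc (0:ℝ) a, f t) ≤ ∫ t in Ioc (0:ℝ) a, t * d ^ c := by
            apply setIntegral_mono_on I1 g1int measurableSet_Ioc
            intro t ht
            calc f t ≤ Real.exp (-N * t) * (t * d ^ c) := hfle1 t ht.1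
              _ ≤ 1 * (t * d ^ c) := by
                  apply mul_le_mul_of_nonneg_right (hexple t ht.1)
                  have : (0:ℝ) < t := ht.1
                  positivity
              _ = t * d ^ c := one_mul _
        _ = (∫ t in Ioc (0:ℝ) a, t) * d ^ c := by rw [integral_mul_const]
        _ = (a ^ 2 - 0 ^ 2) / 2 * d ^ c := by
            rw [← intervalIntegral.integral_of_le ha.le, integral_id]
        _ = a ^ 2 * d ^ c / 2 := by ring
        _ = d ^ (α - (n:ℝ)) / 2 := by rw [haa]
    have B2 : (∫ t in Ioi a, f t) ≤ α / ((n:ℝ) - α) * d ^ (α - (n:ℝ)) := by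
      calc (∫ t in Ioi a, f t) ≤ ∫ t in Ioi a, t ^ p := by
            apply setIntegral_mono_on I2 g2int measurableSet_Ioi
            intro t ht
            have ht0 : t ∈ Ioi (0:ℝ) := lt_trans ha ht
            calc f t ≤ Real.exp (-N * t) * t ^ p := hfle2 t ht0
              _ ≤ 1 * t ^ p := mul_le_mul_of_nonneg_right (hexple t ht0)
                  (Real.rpow_nonneg (le_of_lt ht0) p)
              _ = t ^ p := one_mul _
        _ = -a ^ (p + 1) / (p + 1) := integral_Ioi_rpow_of_lt hp ha
        _ = α / ((n:ℝ) - α) * d ^ (α - (n:ℝ)) := by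
            rw [hap]
            have hp1 : p + 1 = (α - (n:ℝ)) / α := by
              rw [hp_def]; field_simp; ring
            rw [hp1]
            field_simp [hne1, hne2]
            ring
    rw [hsplit]
    have hq : 0 ≤ α / ((n:ℝ) - α) := by positivity
    nlinarith [B1, B2, hdapos]
  · -- case 2
    intro hdge
    -- N⁻¹ ≤ d ^ (2α)
    have hNd : N⁻¹ ≤ d ^ (2 * α) := by
      have h1 := Real.rpow_le_rpow (Real.rpow_nonneg hN0.le _) hdge (by positivity : (0:ℝ) ≤ 2 * α)
      rw [← Real.rpow_mul hN0.le] at h1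
      have he : -(1 / (2 * α)) * (2 * α) = -1 := by field_simp
      rw [he, Real.rpow_neg_one] at h1
      exact h1
    set b : ℝ := N ^ (-(1/2) : ℝ) with hb_def
    have hb : 0 < b := Real.rpow_pos_of_pos hN0 _
    have hba : b ≤ a := by
      have h1 := Real.rpow_le_rpow (Real.rpow_nonneg hN0.le _) hdge hα.le
      rw [← Real.rpow_mul hN0.le] at h1
      have he : -(1 / (2 * α)) * α = -(1/2) := by field_simp
      rw [he] at h1
      exact h1
    have hNb : N * b = Real.sqrt N := by
      rw [Real.sqrt_eq_rpow, hb_def]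
      nth_rewrite 1 [← Real.rpow_one N]
      rw [← Real.rpow_add hN0]
      norm_num
    -- first piece
    have hg2int : IntegrableOn (fun t : ℝ => Real.exp (-N * t) * t) (Ioi 0) := by
      apply (Real.GammaIntegral_convergent (by norm_num : (0:ℝ) < 2)).mono'
        (((measurable_id.const_mul (-N)).exp.mul measurable_id).aestronglyMeasurable)
      rw [ae_restrict_iff' measurableSet_Ioi]
      apply ae_of_all
      intro t ht
      have ht0 : (0:ℝ) < t := ht
      rw [Real.norm_eq_abs, abs_of_nonneg (show (0:ℝ) ≤ (((fun x : ℝ => Real.exp (-N * id x)) * (id : ℝ → ℝ) : ℝ → ℝ) t) from mul_nonneg (Real.exp_nonneg _) ht0.le)]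
      have h1 : Real.exp (-N * t) ≤ Real.exp (-t) := by
        apply Real.exp_le_exp.mpr; nlinarith
      calc Real.exp (-N * t) * t ≤ Real.exp (-t) * t :=
            mul_le_mul_of_nonneg_right h1 ht0.le
        _ = Real.exp (-t) * t ^ ((2:ℝ) - 1) := by
            rw [show (2:ℝ) - 1 = 1 by norm_num, Real.rpow_one]
    have hg2val : (∫ t in Ioi (0:ℝ), Real.exp (-N * t) * t) = N⁻¹ * N⁻¹ := by
      have h := Real.integral_rpow_mul_exp_neg_mul_Ioi (by norm_num : (0:ℝ) < 2) hN0
      rw [show ((∫ t in Ioi (0:ℝ), Real.exp (-N * t) * t))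
          = ∫ t in Ioi (0:ℝ), t ^ ((2:ℝ) - 1) * Real.exp (-(N * t)) from ?_, h]
      · rw [Real.Gamma_two, mul_one, show (2:ℝ) = ((2:ℕ):ℝ) by norm_num, Real.rpow_natCast]
        field_simp
      · apply setIntegral_congr_fun measurableSet_Ioi
        intro t _
        show Real.exp (-N * t) * t = t ^ ((2:ℝ) - 1) * Real.exp (-(N * t))
        rw [show (2:ℝ) - 1 = 1 by norm_num, Real.rpow_one, neg_mul]
        ring
    have g3int : IntegrableOn (fun t : ℝ => Real.exp (-N * t) * t * d ^ c) (Ioi 0) :=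
      hg2int.mul_const _
    have B1 : (∫ t in Ioc (0:ℝ) a, f t) ≤ N⁻¹ * d ^ (α - (n:ℝ)) := by
      calc (∫ t in Ioc (0:ℝ) a, f t)
          ≤ ∫ t in Ioc (0:ℝ) a, Real.exp (-N * t) * t * d ^ c := by
            apply setIntegral_mono_on I1 (g3int.mono_set Ioc_subset_Ioi_self) measurableSet_Ioc
            intro t ht
            rw [mul_assoc]
            exact hfle1 t ht.1
        _ ≤ ∫ t in Ioi (0:ℝ), Real.exp (-N * t) * t * d ^ c := by
            apply setIntegral_mono_set g3int
            · filter_upwards [ae_restrict_mem measurableSet_Ioi] with t ht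
              simp only [Pi.zero_apply]
              have : (0:ℝ) < t := ht
              positivity
            · exact HasSubset.Subset.eventuallyLE Ioc_subset_Ioi_self
        _ = N⁻¹ * N⁻¹ * d ^ c := by rw [integral_mul_const, hg2val]
        _ ≤ N⁻¹ * (d ^ (2 * α) * d ^ c) := by
            rw [mul_assoc]
            apply mul_le_mul_of_nonneg_left _ (inv_nonneg.mpr hN0.le)
            exact mul_le_mul_of_nonneg_right hNd hdc.le
        _ = N⁻¹ * d ^ (α - (n:ℝ)) := by
            rw [← Real.rpow_add hd]
            congr 1
            congr 1
            rw [hc_def]; ring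
    -- second piece
    have hNp : (0:ℝ) < N ^ ((n:ℝ)/α) := Real.rpow_pos_of_pos hN0 _
    have B2 : (∫ t in Ioi a, f t) ≤ N ^ ((n:ℝ)/α - 1) * Real.exp (-Real.sqrt N) := by
      have hbp : b ^ p ≤ N ^ ((n:ℝ)/α) := by
        rw [hb_def, ← Real.rpow_mul hN0.le]
        apply Real.rpow_le_rpow_of_exponent_le hN
        rw [hp_def]
        rw [show -(1/2) * -((n:ℝ)/α) = (n:ℝ)/(2*α) by ring]
        rw [div_le_div_iff₀ (by positivity) hα]
        nlinarith [hα, show (0:ℝ) ≤ (n:ℝ) from Nat.cast_nonneg n]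
      calc (∫ t in Ioi a, f t) ≤ ∫ t in Ioi a, N ^ ((n:ℝ)/α) * Real.exp (-N * t) := by
            apply setIntegral_mono_on I2
              ((exp_neg_integrableOn_Ioi a hN0).const_mul _) measurableSet_Ioi
            intro t ht
            have ht0 : t ∈ Ioi (0:ℝ) := lt_trans ha ht
            calc f t ≤ Real.exp (-N * t) * t ^ p := hfle2 t ht0
              _ ≤ Real.exp (-N * t) * (N ^ ((n:ℝ)/α)) := by
                  apply mul_le_mul_of_nonneg_left _ (Real.exp_nonneg _)
                  calc t ^ p ≤ b ^ p :=
                        Real.rpow_le_rpow_of_nonpos hb (hba.trans (le_of_lt ht)) (by linarith)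
                    _ ≤ N ^ ((n:ℝ)/α) := hbp
              _ = N ^ ((n:ℝ)/α) * Real.exp (-N * t) := mul_comm _ _
        _ ≤ ∫ t in Ioi b, N ^ ((n:ℝ)/α) * Real.exp (-N * t) := by
            apply setIntegral_mono_set ((exp_neg_integrableOn_Ioi b hN0).const_mul _)
            · filter_upwards with t
              simp only [Pi.zero_apply]
              positivity
            · exact HasSubset.Subset.eventuallyLE (Ioi_subset_Ioi hba)
        _ = N ^ ((n:ℝ)/α) * (Real.exp (-N * b) / N) := by
            rw [integral_const_mul, my_integral_exp_neg_mul_Ioi hN0]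
        _ = N ^ ((n:ℝ)/α - 1) * Real.exp (-Real.sqrt N) := by
            rw [Real.rpow_sub hN0, Real.rpow_one, show -N * b = -Real.sqrt N by
              rw [neg_mul, hNb]]
            ring
    rw [hsplit]
    have hX : 0 ≤ N⁻¹ * d ^ (α - (n:ℝ)) := by positivity
    have hY : 0 ≤ N ^ ((n:ℝ)/α - 1) * Real.exp (-Real.sqrt N) := by positivity
    have hq : 0 ≤ α / ((n:ℝ) - α) := by positivity
    have h1 := add_le_add B1 B2
    have h2 : N⁻¹ * d ^ (α - (n:ℝ)) + N ^ ((n:ℝ)/α - 1) * Real.exp (-Real.sqrt N)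
        ≤ (1 + α/((n:ℝ)-α)) * (N⁻¹ * d ^ (α - (n:ℝ)) + N ^ ((n:ℝ)/α - 1) * Real.exp (-Real.sqrt N)) :=
      le_mul_of_one_le_left (by positivity) (by linarith)
    exact h1.trans h2
end

section
/- For 0 < α < 2 and z = (λ+i)^α with λ ≥ 1 sufficiently large (so that 0 < arg(z) < πα/4), one has for all γ > 0 the two-sided bound |γ^α - 2z γ^{α/2} cos(πα/2) + z²| ≈ γ^α + |z|², with implicit constants depending only on α. -/
set_option maxHeartbeats 1000000

open Complex Real

private lemma factor_lower_aux (g c₀ : ℝ) (hg : 0 ≤ g) (hc₀ : 0 ≤ c₀) (w : ℂ)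
    (hre : w.re ≤ c₀ * ‖w‖) :
    (1 - c₀) * (g ^ 2 + ‖w‖ ^ 2) ≤ ‖(g : ℂ) - w‖ ^ 2 := by
  have h1 : ‖w‖ ^ 2 = w.re ^ 2 + w.im ^ 2 := by
    rw [Complex.sq_norm, Complex.normSq_apply]; ring
  have h2 : ‖(g : ℂ) - w‖ ^ 2 = (g - w.re) ^ 2 + w.im ^ 2 := by
    rw [Complex.sq_norm, Complex.normSq_apply]
    simp [Complex.sub_re, Complex.sub_im]
    ring
  have habs : (0:ℝ) ≤ ‖w‖ := norm_nonneg _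
  rw [h1, h2]
  nlinarith [mul_le_mul_of_nonneg_left hre hg,
    mul_nonneg hc₀ (sq_nonneg (g - ‖w‖))]

/-- For `0 < α < 2` and `z = (λ+i)^α` with `λ` large (so `0 < arg z < πα/4`), one has the
two-sided bound `|γ^α - 2z γ^{α/2} cos(πα/2) + z²| ≈ γ^α + |z|²` for all `γ > 0`, with
implicit constants depending only on `α`. -/
theorem resolvent_denominator_comparable (α : ℝ) (hα : 0 < α) (hα2 : α < 2) :
    ∃ c C lam₀ : ℝ, 0 < c ∧ 0 < C ∧ 1 ≤ lam₀ ∧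
      ∀ lam : ℝ, lam₀ ≤ lam → ∀ γ : ℝ, 0 < γ →
        (c * (γ ^ α + ‖(((lam : ℂ) + Complex.I) ^ (α : ℂ))‖ ^ 2) ≤
          ‖(((γ ^ α : ℝ) : ℂ)
            - 2 * (((lam : ℂ) + Complex.I) ^ (α : ℂ)) * ((γ ^ (α / 2) : ℝ) : ℂ)
              * ((Real.cos (π * α / 2) : ℝ) : ℂ)
            + (((lam : ℂ) + Complex.I) ^ (α : ℂ)) ^ 2)‖) ∧
        (‖(((γ ^ α : ℝ) : ℂ)
            - 2 * (((lam : ℂ) + Complex.I) ^ (α : ℂ)) * ((γ ^ (α / 2) : ℝ) : ℂ)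
              * ((Real.cos (π * α / 2) : ℝ) : ℂ)
            + (((lam : ℂ) + Complex.I) ^ (α : ℂ)) ^ 2)‖ ≤
          C * (γ ^ α + ‖(((lam : ℂ) + Complex.I) ^ (α : ℂ))‖ ^ 2)) := by
  have hπ := Real.pi_pos
  set θ : ℝ := π * α / 2 with hθdef
  have hθ0 : 0 < θ := by positivity
  have hθπ : θ < π := by
    rw [hθdef]; nlinarith
  have hθ2 : θ / 2 < π / 2 := by linarith
  set m : ℝ := min (θ / 2) (π - θ) with hmdef
  have hm : 0 < m := lt_min (by linarith) (by linarith)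
  refine ⟨1 - Real.cos (θ / 2), 2, max 1 (α / m), ?_, by norm_num, le_max_left _ _, ?_⟩
  · have : Real.cos (θ / 2) < Real.cos 0 :=
      Real.cos_lt_cos_of_nonneg_of_le_pi le_rfl (by linarith) (by linarith)
    rw [Real.cos_zero] at this; linarith
  intro lam hlam γ hγ
  have hlam1 : (1:ℝ) ≤ lam := le_trans (le_max_left _ _) hlam
  have hlam0 : 0 < lam := by linarith
  -- the complex number and its argument
  set w : ℂ := (lam : ℂ) + Complex.I with hwdef
  have hwre : w.re = lam := by simp [hwdef]
  have hwim : w.im = 1 := by simp [hwdef]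
  have hw0 : w ≠ 0 := by
    intro h; rw [h] at hwim; simp at hwim
  set a : ℝ := Complex.arg w with hadef
  have ha0 : 0 ≤ a := Complex.arg_nonneg_iff.mpr (by rw [hwim]; norm_num)
  have ha2 : a < π / 2 := Complex.arg_lt_pi_div_two_iff.mpr (Or.inl (by rw [hwre]; exact hlam0))
  have hatan : Real.tan a = 1 / lam := by
    rw [hadef, Complex.tan_arg, hwre, hwim]
  have ha_le : a ≤ 1 / lam := by
    rw [← hatan]; exact Real.le_tan ha0 ha2
  -- bound on φ = a * α
  have hφ_le : a * α ≤ m := by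
    have h1 : a * α ≤ (1 / lam) * α := by
      apply mul_le_mul_of_nonneg_right ha_le hα.le
    have h2 : α / m ≤ lam := le_trans (le_max_right _ _) hlam
    have h3 : (1 / lam) * α ≤ m := by
      rw [div_mul_eq_mul_div, one_mul, div_le_iff₀ hlam0]
      calc α = (α / m) * m := by field_simp
        _ ≤ lam * m := by apply mul_le_mul_of_nonneg_right h2 hm.le
        _ = m * lam := mul_comm _ _
    linarith
  have hφ0 : 0 ≤ a * α := mul_nonneg ha0 hα.le
  have hφθ2 : a * α ≤ θ / 2 := le_trans hφ_le (min_le_left _ _)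
  have hφπθ : a * α ≤ π - θ := le_trans hφ_le (min_le_right _ _)
  -- z = exp u
  set u : ℂ := Complex.log w * (α : ℂ) with hudef
  have huim : u.im = a * α := by
    rw [hudef, Complex.mul_im]
    simp [Complex.log_im, hadef]
  have hz : w ^ (α : ℂ) = Complex.exp u := Complex.cpow_def_of_ne_zero hw0 _
  set z : ℂ := w ^ (α : ℂ) with hzdef
  set r : ℝ := ‖z‖ with hrdef
  have hr : r = Real.exp u.re := by rw [hrdef, hz, Complex.norm_exp]
  have hr0 : 0 ≤ r := by rw [hr]; exact (Real.exp_pos _).le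
  -- the two factors
  set ep : ℂ := Complex.exp ((θ : ℂ) * Complex.I) with hepdef
  set em : ℂ := Complex.exp (-((θ : ℂ) * Complex.I)) with hemdef
  have hprod : ep * em = 1 := by
    rw [hepdef, hemdef, ← Complex.exp_add, add_neg_cancel, Complex.exp_zero]
  have hsum : ep + em = 2 * ((Real.cos θ : ℝ) : ℂ) := by
    rw [hepdef, hemdef, Complex.ofReal_cos]
    rw [show -((θ:ℂ) * Complex.I) = (-(θ:ℂ)) * Complex.I by ring]
    rw [Complex.exp_mul_I, Complex.exp_mul_I, Complex.cos_neg, Complex.sin_neg]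
    ring
  -- re and abs of z * ep, z * em
  have hzep : z * ep = Complex.exp (u + (θ : ℂ) * Complex.I) := by
    rw [hz, hepdef, ← Complex.exp_add]
  have hzem : z * em = Complex.exp (u + -((θ : ℂ) * Complex.I)) := by
    rw [hz, hemdef, ← Complex.exp_add]
  have habs_ep : ‖z * ep‖ = r := by
    rw [hzep, Complex.norm_exp, hr]
    congr 1
    simp [Complex.add_re]
  have habs_em : ‖z * em‖ = r := by
    rw [hzem, Complex.norm_exp, hr]
    congr 1
    simp [Complex.add_re]
  have hre_ep : (z * ep).re = r * Real.cos (a * α + θ) := by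
    rw [hzep, Complex.exp_re, hr]
    congr 2
    · simp [Complex.add_re]
    · rw [Complex.add_im, huim]; simp
  have hre_em : (z * em).re = r * Real.cos (a * α - θ) := by
    rw [hzem, Complex.exp_re, hr]
    congr 2
    · simp [Complex.add_re]
    · rw [Complex.add_im, huim]; simp; ring
  -- cosine bounds
  have hc0 : 0 ≤ Real.cos (θ / 2) :=
    (Real.cos_pos_of_mem_Ioo ⟨by linarith, hθ2⟩).le
  have hcos_ep : Real.cos (a * α + θ) ≤ Real.cos (θ / 2) :=
    Real.cos_le_cos_of_nonneg_of_le_pi (by linarith) (by linarith) (by linarith)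
  have hcos_em : Real.cos (a * α - θ) ≤ Real.cos (θ / 2) := by
    rw [show a * α - θ = -(θ - a * α) by ring, Real.cos_neg]
    exact Real.cos_le_cos_of_nonneg_of_le_pi (by linarith) (by linarith) (by linarith)
  -- γ-powers
  set g : ℝ := γ ^ (α / 2) with hgdef
  have hg0 : 0 ≤ g := Real.rpow_nonneg hγ.le _
  have hgsq : γ ^ α = g ^ 2 := by
    rw [hgdef, ← Real.rpow_natCast (γ ^ (α / 2)) 2, ← Real.rpow_mul hγ.le]
    norm_num
  -- factorization
  have hfac : ((γ ^ α : ℝ) : ℂ) - 2 * z * ((γ ^ (α / 2) : ℝ) : ℂ) * ((Real.cos θ : ℝ) : ℂ)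
      + z ^ 2 = ((g : ℂ) - z * ep) * ((g : ℂ) - z * em) := by
    have hγc : ((γ ^ α : ℝ) : ℂ) = ((g : ℝ) : ℂ) ^ 2 := by
      rw [hgsq]; push_cast; ring
    rw [hγc]
    have hgc : ((γ ^ (α / 2) : ℝ) : ℂ) = ((g : ℝ) : ℂ) := by rw [hgdef]
    rw [hgc]
    linear_combination ((g:ℝ):ℂ) * z * hsum - z ^ 2 * hprod
  -- lower bound pieces
  set c₀ : ℝ := Real.cos (θ / 2) with hc₀def
  set S : ℝ := γ ^ α + r ^ 2 with hSdef
  have hS0 : 0 ≤ S := by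
    rw [hSdef]
    have := Real.rpow_nonneg hγ.le α
    positivity
  have hlow_ep : (1 - c₀) * S ≤ ‖(g : ℂ) - z * ep‖ ^ 2 := by
    have := factor_lower_aux g c₀ hg0 hc0 (z * ep)
      (by rw [hre_ep, habs_ep]
          calc r * Real.cos (a * α + θ) ≤ r * c₀ := by
                exact mul_le_mul_of_nonneg_left hcos_ep hr0
            _ = c₀ * r := mul_comm _ _)
    rw [habs_ep] at this
    rw [hSdef, hgsq]
    exact this
  have hlow_em : (1 - c₀) * S ≤ ‖(g : ℂ) - z * em‖ ^ 2 := by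
    have := factor_lower_aux g c₀ hg0 hc0 (z * em)
      (by rw [hre_em, habs_em]
          calc r * Real.cos (a * α - θ) ≤ r * c₀ := by
                exact mul_le_mul_of_nonneg_left hcos_em hr0
            _ = c₀ * r := mul_comm _ _)
    rw [habs_em] at this
    rw [hSdef, hgsq]
    exact this
  have hcS : 0 ≤ (1 - c₀) * S := by
    apply mul_nonneg _ hS0
    have : c₀ ≤ 1 := Real.cos_le_one _
    linarith
  constructor
  · -- lower bound
    rw [hfac, norm_mul]
    have h1 : Real.sqrt ((1 - c₀) * S) ≤ ‖(g : ℂ) - z * ep‖ := by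
      have := Real.sqrt_le_sqrt hlow_ep
      rwa [Real.sqrt_sq (norm_nonneg _)] at this
    have h2 : Real.sqrt ((1 - c₀) * S) ≤ ‖(g : ℂ) - z * em‖ := by
      have := Real.sqrt_le_sqrt hlow_em
      rwa [Real.sqrt_sq (norm_nonneg _)] at this
    calc (1 - c₀) * (γ ^ α + r ^ 2)
        = Real.sqrt ((1 - c₀) * S) * Real.sqrt ((1 - c₀) * S) := by
          rw [Real.mul_self_sqrt hcS, hSdef]
      _ ≤ ‖(g : ℂ) - z * ep‖ * ‖(g : ℂ) - z * em‖ := by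
          apply mul_le_mul h1 h2 (Real.sqrt_nonneg _) (norm_nonneg _)
  · -- upper bound
    have htri : ‖((γ ^ α : ℝ) : ℂ)
        - 2 * z * ((γ ^ (α / 2) : ℝ) : ℂ) * ((Real.cos θ : ℝ) : ℂ) + z ^ 2‖
        ≤ γ ^ α + 2 * r * g + r ^ 2 := by
      refine le_trans (norm_add_le _ _) ?_
      refine add_le_add (le_trans (norm_sub_le _ _) ?_) ?_
      · apply add_le_add
        · rw [Complex.norm_real, Real.norm_eq_abs]; exact le_of_eq (_root_.abs_of_nonneg (Real.rpow_nonneg hγ.le _))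
        · rw [norm_mul, norm_mul, Complex.norm_real, Complex.norm_real, Real.norm_eq_abs, Real.norm_eq_abs, norm_mul]
          simp only [Complex.norm_two]
          rw [← hrdef, ← hgdef]
          calc 2 * r * |g| * |Real.cos θ| ≤ 2 * r * |g| * 1 := by
                apply mul_le_mul_of_nonneg_left (Real.abs_cos_le_one _)
                positivity
            _ = 2 * r * g := by rw [_root_.abs_of_nonneg hg0]; ring
      · rw [norm_pow, ← hrdef]
    refine le_trans htri ?_
    have h2rg : 2 * r * g ≤ γ ^ α + r ^ 2 := by
      rw [hgsq]; linarith only [two_mul_le_add_sq r g]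
    linarith only [htri, h2rg, hSdef]
end
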